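/- Let N ≥ 2 and let A be a symmetric, irreflexive adjacency relation on Fin N whose associated simple graph is connected. Let P denote the number of SIR paths from a configuration with exactly one infected node and all other nodes susceptible to the all-recovered configuration. Then N! ≤ P and 2^(N−1)·P < (2N−1)!. -/

import Mathlib

/-- An SIR transition: either a neighbour infects a susceptible node,
or an infected node recovers. -/
def SIRTrans {N : ℕ} (A : Fin N → Fin N → Prop) (x y : Fin N → Fin 3) : Prop :=
  (∃ m : Fin N, x m = 0 ∧ y m = 1 ∧ (∃ j : Fin N, A j m ∧ x j = 1) ∧
    ∀ i : Fin N, i ≠ m → y i = x i) ∨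
  (∃ m : Fin N, x m = 1 ∧ y m = 2 ∧ ∀ i : Fin N, i ≠ m → y i = x i)

/-- An SIR path from `x` to `y`: a nonempty finite sequence of configurations
starting at `x`, ending at `y`, with consecutive pairs being SIR transitions. -/
def IsSIRPath {N : ℕ} (A : Fin N → Fin N → Prop) (x y : Fin N → Fin 3)
    (L : List (Fin N → Fin 3)) : Prop :=
  L ≠ [] ∧ L.head? = some x ∧ L.getLast? = some y ∧ L.IsChain (SIRTrans A)

/-- The number of SIR paths from `x` to `y`. -/
noncomputable def numSIRPaths {N : ℕ} (A : Fin N → Fin N → Prop)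
    (x y : Fin N → Fin 3) : ℕ :=
  Set.ncard {L : List (Fin N → Fin 3) | IsSIRPath A x y L}

namespace SIRAux

variable {N : ℕ}

/-- apply one event (touch node m) -/
def sstep (x : Fin N → Fin 3) (m : Fin N) : Fin N → Fin 3 :=
  Function.update x m (x m + 1)

/-- validity of touching m in config x -/
def okStep (A : Fin N → Fin N → Prop) (x : Fin N → Fin 3) (m : Fin N) : Prop :=
  (x m = 0 ∧ ∃ j, A j m ∧ x j = 1) ∨ x m = 1

/-- valid word -/
def VW (A : Fin N → Fin N → Prop) : (Fin N → Fin 3) → List (Fin N) → Prop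
  | _, [] => True
  | x, m :: w => okStep A x m ∧ VW A (sstep x m) w

lemma sstep_self (x : Fin N → Fin 3) (m : Fin N) : sstep x m m = x m + 1 :=
  Function.update_self _ _ _

lemma sstep_ne (x : Fin N → Fin 3) {m k : Fin N} (h : k ≠ m) : sstep x m k = x k :=
  Function.update_of_ne h _ _

lemma okStep.le1 {A : Fin N → Fin N → Prop} {x : Fin N → Fin 3} {m : Fin N}
    (h : okStep A x m) : x m = 0 ∨ x m = 1 := by
  rcases h with ⟨h, -⟩ | h
  · exact Or.inl h
  · exact Or.inr h

lemma trans_of_ok {A : Fin N → Fin N → Prop} {x : Fin N → Fin 3} {m : Fin N}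
    (h : okStep A x m) : SIRTrans A x (sstep x m) := by
  rcases h with ⟨h0, j, hj, hj1⟩ | h1
  · left
    exact ⟨m, h0, by rw [sstep_self, h0]; rfl, ⟨j, hj, hj1⟩, fun i hi => sstep_ne x hi⟩
  · right
    exact ⟨m, h1, by rw [sstep_self, h1]; rfl, fun i hi => sstep_ne x hi⟩

lemma vw_append {A : Fin N → Fin N → Prop} (u : List (Fin N)) :
    ∀ (x : Fin N → Fin 3) (v : List (Fin N)),
    VW A x (u ++ v) ↔ VW A x u ∧ VW A (List.foldl sstep x u) v := by
  induction u with
  | nil => intro x v; simp [VW]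
  | cons m u ih =>
      intro x v
      simp only [List.cons_append, VW, List.foldl_cons, List.append_eq, ih, and_assoc]

lemma scanl_head? (x : Fin N → Fin 3) (w : List (Fin N)) :
    (List.scanl sstep x w).head? = some x := by
  cases w <;> simp [List.scanl_cons, List.scanl_nil]

lemma chain'_scanl {A : Fin N → Fin N → Prop} (w : List (Fin N)) :
    ∀ (x : Fin N → Fin 3), VW A x w → List.Chain' (SIRTrans A) (List.scanl sstep x w) := by
  induction w with
  | nil => intro x _; exact List.isChain_singleton _
  | cons m w ih =>
      intro x hvw
      rw [List.scanl_cons]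
      refine List.IsChain.cons (ih _ hvw.2) ?_
      intro y hy
      rw [scanl_head?] at hy
      cases hy
      exact trans_of_ok hvw.1

lemma scanl_getLast (w : List (Fin N)) :
    ∀ (x : Fin N → Fin 3), (List.scanl sstep x w).getLast? = some (List.foldl sstep x w) := by
  induction w with
  | nil => intro x; rfl
  | cons m w ih =>
      intro x
      rw [List.scanl_cons, List.foldl_cons, ← ih (sstep x m)]
      cases h : List.scanl sstep (sstep x m) w with
      | nil => exact absurd h (List.ne_nil_of_length_pos (by rw [List.length_scanl]; omega))
      | cons a l => simp [List.getLast?_cons_cons]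

lemma path_of_word {A : Fin N → Fin N → Prop} {x y : Fin N → Fin 3} {w : List (Fin N)}
    (hvw : VW A x w) (hy : List.foldl sstep x w = y) :
    IsSIRPath A x y (List.scanl sstep x w) := by
  refine ⟨List.ne_nil_of_length_pos (by rw [List.length_scanl]; omega),
    scanl_head? x w, ?_, chain'_scanl w x hvw⟩
  rw [scanl_getLast, hy]

lemma word_of_path {A : Fin N → Fin N → Prop} (L : List (Fin N → Fin 3)) :
    ∀ (x y : Fin N → Fin 3), IsSIRPath A x y L →
    ∃ w, VW A x w ∧ List.foldl sstep x w = y ∧ L = List.scanl sstep x w := by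
  induction L with
  | nil => intro x y h; exact absurd rfl h.1
  | cons a L ih =>
      intro x y h
      obtain ⟨-, hh, hl, hc⟩ := h
      rw [List.head?_cons, Option.some_inj] at hh
      subst hh
      cases L with
      | nil =>
          refine ⟨[], trivial, ?_, rfl⟩
          simpa using hl
      | cons b L =>
          have htr : SIRTrans A a b := (List.isChain_cons_cons.1 hc).1
          have : ∃ m, okStep A a m ∧ b = sstep a m := by
            rcases htr with ⟨m, h0, h1, hj, hrest⟩ | ⟨m, h1, h2, hrest⟩
            · refine ⟨m, Or.inl ⟨h0, hj⟩, funext fun k => ?_⟩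
              by_cases hk : k = m
              · subst hk; rw [h1, sstep_self, h0]; rfl
              · rw [hrest k hk, sstep_ne a hk]
            · refine ⟨m, Or.inr h1, funext fun k => ?_⟩
              by_cases hk : k = m
              · subst hk; rw [h2, sstep_self, h1]; rfl
              · rw [hrest k hk, sstep_ne a hk]
          obtain ⟨m, hok, hb⟩ := this
          have hpath : IsSIRPath A b y (b :: L) :=
            ⟨List.cons_ne_nil _ _, rfl, by simpa [List.getLast?_cons_cons] using hl,
              (List.isChain_cons_cons.1 hc).2⟩
          obtain ⟨w, hw1, hw2, hw3⟩ := ih b y hpath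
          subst hb
          exact ⟨m :: w, ⟨hok, hw1⟩, hw2, by
            rw [List.scanl_cons, ← hw3]⟩

lemma sstep_left_ne (x : Fin N → Fin 3) {m n : Fin N} (h : m ≠ n) :
    sstep x m ≠ sstep x n := by
  intro he
  have := congrFun he m
  rw [sstep_self, sstep_ne x h] at this
  exact (by decide : ∀ a : Fin 3, a + 1 ≠ a) (x m) this

lemma scanl_inj (w : List (Fin N)) : ∀ (w' : List (Fin N)) (x : Fin N → Fin 3),
    List.scanl sstep x w = List.scanl sstep x w' → w = w' := by
  induction w with
  | nil =>
      intro w' x h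
      cases w' with
      | nil => rfl
      | cons n w' =>
          have := congrArg List.length h
          rw [List.length_scanl, List.length_scanl] at this
          simp at this
  | cons m w ih =>
      intro w' x h
      cases w' with
      | nil =>
          have := congrArg List.length h
          rw [List.length_scanl, List.length_scanl] at this
          simp at this
      | cons n w' =>
          rw [List.scanl_cons, List.scanl_cons,
            List.cons_inj_right] at h
          have hmn : m = n := by
            by_contra hne
            exact sstep_left_ne x hne (by
              have h1 := congrArg List.head? h
              rw [scanl_head?, scanl_head?, Option.some_inj] at h1
              exact h1)
          subst hmn
          rw [ih w' (sstep x m) h]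

/-- natural value sum of a config -/
def sumVal (x : Fin N → Fin 3) : ℕ := ∑ k, (x k : ℕ)

lemma val_add_one {a : Fin 3} (h : a = 0 ∨ a = 1) : ((a + 1 : Fin 3) : ℕ) = (a : ℕ) + 1 := by
  rcases h with h | h <;> subst h <;> rfl

lemma sumVal_sstep {A : Fin N → Fin N → Prop} {x : Fin N → Fin 3} {m : Fin N}
    (h : okStep A x m) : sumVal (sstep x m) = sumVal x + 1 := by
  unfold sumVal
  rw [Finset.sum_eq_sum_sdiff_singleton_add (Finset.mem_univ m)
        (fun k => ((sstep x m k : Fin 3) : ℕ)),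
      Finset.sum_eq_sum_sdiff_singleton_add (Finset.mem_univ m)
        (fun k => ((x k : Fin 3) : ℕ))]
  have e1 : ∑ k ∈ Finset.univ \ {m}, ((sstep x m k : Fin 3) : ℕ)
      = ∑ k ∈ Finset.univ \ {m}, ((x k : Fin 3) : ℕ) :=
    Finset.sum_congr rfl fun k hk => by
      rw [sstep_ne x (by simpa using (Finset.mem_sdiff.1 hk).2)]
  rw [e1, sstep_self, val_add_one h.le1]
  omega

lemma count_of_vw {A : Fin N → Fin N → Prop} (w : List (Fin N)) :
    ∀ (x : Fin N → Fin 3), VW A x w →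
    ∀ n, ((List.foldl sstep x w) n : ℕ) = (x n : ℕ) + w.count n := by
  induction w with
  | nil => intro x _ n; simp
  | cons m w ih =>
      intro x hvw n
      rw [List.foldl_cons]
      rw [ih (sstep x m) hvw.2 n, List.count_cons]
      by_cases hnm : n = m
      · subst hnm
        rw [sstep_self, val_add_one hvw.1.le1]
        simp only [beq_self_eq_true, if_true]
        omega
      · rw [sstep_ne x hnm]
        simp [Ne.symm hnm, hnm]

lemma length_of_vw {A : Fin N → Fin N → Prop} (w : List (Fin N)) :
    ∀ (x : Fin N → Fin 3), VW A x w →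
    sumVal (List.foldl sstep x w) = sumVal x + w.length := by
  induction w with
  | nil => intro x _; simp
  | cons m w ih =>
      intro x hvw
      rw [List.foldl_cons, ih (sstep x m) hvw.2, sumVal_sstep hvw.1, List.length_cons]
      omega

/-- indicator configuration of a set of infected nodes -/
def indC (s : Finset (Fin N)) : Fin N → Fin 3 := fun k => if k ∈ s then 1 else 0

lemma sstep_indC {s : Finset (Fin N)} {m : Fin N} (hm : m ∉ s) :
    sstep (indC s) m = indC (insert m s) := by
  funext k
  by_cases hk : k = m
  · subst hk
    rw [sstep_self]
    simp [indC, hm]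
  · rw [sstep_ne _ hk]
    simp [indC, hk]

lemma inf_word_aux {G : SimpleGraph (Fin N)} (hconn : G.Connected) (i0 : Fin N) :
    ∀ (k : ℕ) (s : Finset (Fin N)), (Finset.univ \ s).card = k → i0 ∈ s →
    ∃ w, VW G.Adj (indC s) w ∧ List.foldl sstep (indC s) w = indC Finset.univ := by
  intro k
  induction k using Nat.strong_induction_on with
  | _ k ih =>
      intro s hcard hi0
      by_cases hs : s = Finset.univ
      · exact ⟨[], trivial, by rw [hs]; rfl⟩
      · obtain ⟨v, hv⟩ : ∃ v, v ∉ s := by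
          by_contra hno
          push_neg at hno
          exact hs (Finset.eq_univ_of_forall hno)
        -- frontier: walk from i0 to v
        obtain ⟨p⟩ := hconn.preconnected i0 v
        have hfront : ∀ {a b : Fin N} (p : G.Walk a b), a ∈ s → b ∉ s →
            ∃ m, m ∉ s ∧ ∃ j ∈ s, G.Adj j m := by
          intro a b p
          induction p with
          | nil => intro h1 h2; exact absurd h1 h2
          | @cons u c b h p ihp =>
              intro ha hb
              by_cases hc : c ∈ s
              · exact ihp hc hb
              · exact ⟨c, hc, u, ha, h⟩
        obtain ⟨m, hm, j, hj, hA⟩ := hfront p hi0 hv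
        have hlt : (Finset.univ \ insert m s).card < k := by
          rw [← hcard]
          apply Finset.card_lt_card
          refine ⟨Finset.sdiff_subset_sdiff le_rfl (Finset.subset_insert m s), ?_⟩
          intro hsub
          have : m ∈ Finset.univ \ s := Finset.mem_sdiff.2 ⟨Finset.mem_univ m, hm⟩
          have := hsub this
          simp at this
        obtain ⟨w, hw1, hw2⟩ := ih _ hlt (insert m s) rfl (Finset.mem_insert_of_mem hi0)
        refine ⟨m :: w, ⟨Or.inl ⟨?_, j, hA, ?_⟩, ?_⟩, ?_⟩
        · simp [indC, hm]
        · simp [indC, hj]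
        · rw [sstep_indC hm]; exact hw1
        · rw [List.foldl_cons, sstep_indC hm]; exact hw2

lemma rec_word {A : Fin N → Fin N → Prop} (r : List (Fin N)) :
    ∀ (x : Fin N → Fin 3), r.Nodup → (∀ m ∈ r, x m = 1) →
    VW A x r ∧ List.foldl sstep x r = fun k => if k ∈ r then 2 else x k := by
  induction r with
  | nil => intro x _ _; exact ⟨trivial, by funext k; simp⟩
  | cons m r ih =>
      intro x hnd hall
      have hm1 : x m = 1 := hall m List.mem_cons_self
      have hstep : ∀ n ∈ r, sstep x m n = 1 := fun n hn => by
        rw [sstep_ne x (by rintro rfl; exact (List.nodup_cons.1 hnd).1 hn)]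
        exact hall n (List.mem_cons_of_mem m hn)
      obtain ⟨h1, h2⟩ := ih (sstep x m) (List.nodup_cons.1 hnd).2 hstep
      refine ⟨⟨Or.inr hm1, h1⟩, ?_⟩
      rw [List.foldl_cons, h2]
      funext k
      by_cases hk : k ∈ r
      · simp [hk]
      · by_cases hkm : k = m
        · subst hkm
          simp [hk, sstep_self, hm1]
        · rw [sstep_ne x hkm]
          simp [hk, hkm]

/-- label occurrences of each node alternately starting with `f m` -/
def lbl (f : Fin N → Bool) : List (Fin N) → List (Fin N × Bool)
  | [] => []
  | m :: w => (m, f m) :: lbl (Function.update f m (!f m)) w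

lemma lbl_map_fst (w : List (Fin N)) : ∀ f, (lbl f w).map Prod.fst = w := by
  induction w with
  | nil => intro f; rfl
  | cons m w ih => intro f; rw [lbl, List.map_cons, ih]

lemma lbl_length (w : List (Fin N)) (f : Fin N → Bool) : (lbl f w).length = w.length := by
  calc (lbl f w).length = ((lbl f w).map Prod.fst).length := (List.length_map _).symm
    _ = w.length := by rw [lbl_map_fst]

lemma mem_lbl (w : List (Fin N)) : ∀ (f : Fin N → Bool) (m : Fin N) (b : Bool),
    w.count m ≤ 1 → (m, b) ∈ lbl f w → b = f m := by
  induction w with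
  | nil => intro f m b _ h; simp [lbl] at h
  | cons n w ih =>
      intro f m b hcount hmem
      rcases List.mem_cons.1 hmem with he | ht
      · rw [Prod.mk.injEq] at he
        rw [he.1, he.2]
      · by_cases hmn : m = n
        · subst hmn
          have h0 : w.count m = 0 := by
            rw [List.count_cons_self] at hcount; omega
          have : m ∈ w := by
            have : m ∈ (lbl (Function.update f m (!f m)) w).map Prod.fst :=
              List.mem_map.2 ⟨(m, b), ht, rfl⟩
            rwa [lbl_map_fst] at this
          rw [← List.count_pos_iff] at this
          omega
        · have hc : w.count m ≤ 1 := by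
            rw [List.count_cons_of_ne (Ne.symm hmn)] at hcount; exact hcount
          have := ih (Function.update f n (!f n)) m b hc ht
          rwa [Function.update_of_ne hmn] at this

lemma nodup_lbl (w : List (Fin N)) : ∀ f, (∀ m, w.count m ≤ 2) → (lbl f w).Nodup := by
  induction w with
  | nil => intro f _; exact List.nodup_nil
  | cons n w ih =>
      intro f hcount
      rw [lbl, List.nodup_cons]
      constructor
      · intro hmem
        have hc : w.count n ≤ 1 := by
          have := hcount n; rw [List.count_cons_self] at this; omega
        have := mem_lbl w (Function.update f n (!f n)) n (f n) hc hmem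
        rw [Function.update_self] at this
        simp at this
      · refine ih _ fun m => ?_
        have := hcount m
        rw [List.count_cons] at this
        omega

lemma lbl_inj_f (w : List (Fin N)) : ∀ f g, lbl f w = lbl g w → ∀ m ∈ w, f m = g m := by
  induction w with
  | nil => intro f g _ m hm; simp at hm
  | cons n w ih =>
      intro f g h m hm
      rw [lbl, lbl, List.cons_eq_cons, Prod.mk.injEq] at h
      by_cases hmn : m = n
      · subst hmn; exact h.1.2
      · have := ih _ _ h.2 m (by
          rcases List.mem_cons.1 hm with h' | h'
          · exact absurd h' hmn
          · exact h')
        rwa [Function.update_of_ne hmn, Function.update_of_ne hmn] at this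

/-- the embedding of `Fin (2N-1)` into labelled events induced by a word -/
def lblEmb {N : ℕ} (i0 : Fin N) (f : Fin N → Bool) (w : List (Fin N))
    (hlen : w.length = 2 * N - 1)
    (h2 : ∀ m, w.count m ≤ 2) (h1 : w.count i0 ≤ 1) (hf : f i0 = false) :
    Fin (2 * N - 1) ↪ {p : Fin N × Bool // p ≠ (i0, true)} where
  toFun i := ⟨(lbl f w).get (Fin.cast (by rw [lbl_length, hlen]) i), by
    intro he
    have hmem : ((i0, true) : Fin N × Bool) ∈ lbl f w := he ▸ List.get_mem _ _
    have := mem_lbl w f i0 true h1 hmem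
    rw [hf] at this
    exact Bool.noConfusion this⟩
  inj' := by
    intro i j h
    rw [Subtype.mk.injEq] at h
    have h2' := List.nodup_iff_injective_get.1 (nodup_lbl w f h2) h
    have := congrArg Fin.val h2'
    simp only [Fin.coe_cast] at this
    exact Fin.ext this

lemma lblEmb_eq {N : ℕ} {i0 : Fin N} {f f' : Fin N → Bool} {w w' : List (Fin N)}
    {hlen : w.length = 2 * N - 1} {hlen' : w'.length = 2 * N - 1}
    {h2 h2' h1 h1' hf hf'}
    (h : lblEmb i0 f w hlen h2 h1 hf = lblEmb i0 f' w' hlen' h2' h1' hf') :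
    lbl f w = lbl f' w' := by
  apply List.ext_get
  · rw [lbl_length, lbl_length, hlen, hlen']
  · intro n hn hn'
    have hn2 : n < 2 * N - 1 := by rwa [lbl_length, hlen] at hn
    have h3 := congrFun (congrArg (fun e => Function.Embedding.toFun e) h) ⟨n, hn2⟩
    simp only [lblEmb, Subtype.mk.injEq] at h3
    exact h3

end SIRAux

open SIRAux in
/-- For any symmetric, irreflexive, connected adjacency relation on
`N ≥ 2` nodes, the number `P` of SIR paths from a configuration with exactly one
infected node (all others susceptible) to the all-recovered configuration
satisfies `N! ≤ P` and `2^(N−1)·P < (2N−1)!`. -/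
theorem stmt1 (N : ℕ) (hN : 2 ≤ N) (A : Fin N → Fin N → Prop)
    (hsymm : ∀ j m : Fin N, A j m → A m j) (hirr : ∀ j : Fin N, ¬ A j j)
    (hconn : (SimpleGraph.mk A ⟨fun j m h => hsymm j m h⟩
      ⟨fun j h => hirr j h⟩).Connected)
    (i0 : Fin N) (P : ℕ)
    (hP : P = numSIRPaths A (fun k => if k = i0 then 1 else 0) (fun _ => 2)) :
    Nat.factorial N ≤ P ∧ 2 ^ (N - 1) * P < Nat.factorial (2 * N - 1) := by
  classical
  subst hP
  set x0 : Fin N → Fin 3 := fun k => if k = i0 then 1 else 0 with hx0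
  set topc : Fin N → Fin 3 := fun _ => 2 with htopc
  set W : Set (List (Fin N)) :=
    {w | SIRAux.VW A x0 w ∧ List.foldl SIRAux.sstep x0 w = topc} with hWdef
  -- number of paths equals number of valid words
  have hinj : Function.Injective (fun w => List.scanl sstep x0 w) :=
    fun w w' h => scanl_inj w w' x0 h
  have himg : {L | IsSIRPath A x0 topc L} = (fun w => List.scanl sstep x0 w) '' W := by
    ext L
    constructor
    · intro h
      obtain ⟨w, h1, h2, h3⟩ := word_of_path L x0 topc h
      exact ⟨w, ⟨h1, h2⟩, h3.symm⟩
    · rintro ⟨w, ⟨h1, h2⟩, rfl⟩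
      exact path_of_word h1 h2
  have hnum : numSIRPaths A x0 topc = W.ncard := by
    rw [numSIRPaths, himg, Set.ncard_image_of_injective W hinj]
  -- sum values
  have hsum0 : sumVal x0 = 1 := by
    unfold sumVal
    have hv : ∀ k, ((x0 k : Fin 3) : ℕ) = if k = i0 then 1 else 0 := fun k => by
      simp only [hx0]; split <;> decide
    rw [Finset.sum_congr rfl fun k _ => hv k]
    simp
  have hsumtop : sumVal topc = 2 * N := by
    unfold sumVal
    simp only [htopc]
    simp [Finset.sum_const, mul_comm]
  -- facts about words in W
  have hWlen : ∀ w ∈ W, w.length = 2 * N - 1 := by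
    intro w hw
    have h := length_of_vw w x0 hw.1
    rw [hw.2, hsumtop, hsum0] at h
    omega
  have hWcount : ∀ w ∈ W, ∀ m, w.count m = if m = i0 then 1 else 2 := by
    intro w hw m
    have h := count_of_vw w x0 hw.1 m
    rw [hw.2] at h
    have h2 : ((topc m : Fin 3) : ℕ) = 2 := by simp only [htopc]; decide
    rw [h2] at h
    have h3 : ((x0 m : Fin 3) : ℕ) = if m = i0 then 1 else 0 := by
      simp only [hx0]; split <;> decide
    rw [h3] at h
    split at h <;> [skip; skip] <;> split <;> omega
  have hWhead : ∀ w ∈ W, ∀ m w', w = m :: w' → m ≠ i0 := by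
    rintro w hw m w' rfl hmi0
    rw [hmi0] at hw
    obtain ⟨hok, hvw'⟩ := hw.1
    have hx0i0 : x0 i0 = 1 := by simp only [hx0]; simp
    have hc : ∀ k, sstep x0 i0 k = if k = i0 then 2 else 0 := by
      intro k
      by_cases hk : k = i0
      · rw [hk, sstep_self, hx0i0, if_pos rfl]
        decide
      · rw [sstep_ne _ hk]
        simp only [hx0]
        rw [if_neg hk, if_neg hk]
    obtain ⟨m1, hm1⟩ : ∃ m1 : Fin N, m1 ≠ i0 := by
      have h0 : (0 : ℕ) < N := by omega
      have h1 : (1 : ℕ) < N := by omega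
      by_cases h : (⟨0, h0⟩ : Fin N) = i0
      · exact ⟨⟨1, h1⟩, by rw [← h]; simp [Fin.ext_iff]⟩
      · exact ⟨⟨0, h0⟩, h⟩
    have hm1w : m1 ∈ w' := by
      have hc1 := hWcount _ hw m1
      rw [if_neg hm1, List.count_cons_of_ne (Ne.symm hm1)] at hc1
      rw [← List.count_pos_iff]
      omega
    cases w' with
    | nil => simp at hm1w
    | cons n w'' =>
        obtain ⟨hok2, -⟩ := hvw'
        rcases hok2 with ⟨hn0, j, hA, hj1⟩ | hn1
        · rw [hc j] at hj1
          split_ifs at hj1 <;> exact absurd hj1 (by decide)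
        · rw [hc n] at hn1
          split_ifs at hn1 <;> exact absurd hn1 (by decide)
  -- finiteness
  have hWfin : W.Finite :=
    (List.finite_length_le (Fin N) (2 * N - 1)).subset fun w hw => le_of_eq (hWlen w hw)
  letI : Fintype ↥W := hWfin.fintype
  have hncard : W.ncard = Fintype.card ↥W := by
    rw [Set.ncard_eq_toFinset_card', Set.toFinset_card]
  ----------------------------------------------------------------
  -- LOWER BOUND
  ----------------------------------------------------------------
  have hlow : Nat.factorial N ≤ W.ncard := by
    obtain ⟨wI, hwI1, hwI2⟩ := inf_word_aux hconn i0 _ ({i0} : Finset (Fin N)) rfl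
      (Finset.mem_singleton_self i0)
    have hx0ind : indC ({i0} : Finset (Fin N)) = x0 := by
      funext k
      rw [indC, hx0]
      simp
    rw [hx0ind] at hwI1 hwI2
    set gmap : Equiv.Perm (Fin N) → List (Fin N) := fun σ => wI ++ List.ofFn σ with hgmap
    have hrec : ∀ σ : Equiv.Perm (Fin N),
        SIRAux.VW A (indC Finset.univ) (List.ofFn σ) ∧
        List.foldl sstep (indC Finset.univ) (List.ofFn σ) =
          fun k => if k ∈ List.ofFn σ then 2 else indC Finset.univ k := by
      intro σ
      exact rec_word (List.ofFn σ) (indC Finset.univ)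
        (List.nodup_ofFn.2 σ.injective)
        (fun m _ => by rw [indC]; simp)
    have hgmem : ∀ σ, gmap σ ∈ W := by
      intro σ
      constructor
      · rw [hgmap]
        refine (vw_append wI x0 (List.ofFn σ)).2 ⟨hwI1, ?_⟩
        rw [hwI2]
        exact (hrec σ).1
      · rw [hgmap, List.foldl_append, hwI2, (hrec σ).2]
        funext k
        have : k ∈ List.ofFn σ := by
          rw [List.mem_ofFn]
          exact ⟨σ.symm k, σ.apply_symm_apply k⟩
        rw [htopc, if_pos this]
    have hginj : Function.Injective gmap := by
      intro σ τ h
      rw [hgmap] at h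
      have h2 := List.append_cancel_left h
      rw [List.ofFn_inj] at h2
      exact Equiv.coe_fn_injective h2
    rw [hncard]
    calc Nat.factorial N = Fintype.card (Equiv.Perm (Fin N)) := by
          rw [Fintype.card_perm, Fintype.card_fin]
      _ ≤ Fintype.card ↥W := Fintype.card_le_of_injective
          (fun σ => (⟨gmap σ, hgmem σ⟩ : ↥W))
          (fun σ τ h => hginj (congrArg Subtype.val h))
  ----------------------------------------------------------------
  -- UPPER BOUND
  ----------------------------------------------------------------
  have hhigh : 2 ^ (N - 1) * W.ncard < Nat.factorial (2 * N - 1) := by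
    have hcardE : Fintype.card {p : Fin N × Bool // p ≠ (i0, true)} = 2 * N - 1 := by
      have h := Fintype.card_subtype_compl (fun p : Fin N × Bool => p = (i0, true))
      rw [Fintype.card_subtype_eq, Fintype.card_prod, Fintype.card_fin, Fintype.card_bool] at h
      rw [h]
      omega
    have hcardsub : Fintype.card {m : Fin N // m ≠ i0} = N - 1 := by
      have h := Fintype.card_subtype_compl (fun m : Fin N => m = i0)
      rw [Fintype.card_subtype_eq, Fintype.card_fin] at h
      exact h
    -- data needed for lblEmb for each w ∈ W
    have hWc2 : ∀ w ∈ W, ∀ m, w.count m ≤ 2 := by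
      intro w hw m
      rw [hWcount w hw m]
      split <;> omega
    have hWc1 : ∀ w ∈ W, w.count i0 ≤ 1 := by
      intro w hw
      rw [hWcount w hw i0, if_pos rfl]
    set F : ({m : Fin N // m ≠ i0} → Bool) → Fin N → Bool :=
      fun f m => if h : m = i0 then false else f ⟨m, h⟩ with hF
    have hFi0 : ∀ f, F f i0 = false := fun f => by rw [hF]; simp
    set Psi : (({m : Fin N // m ≠ i0} → Bool) × ↥W) →
        (Fin (2 * N - 1) ↪ {p : Fin N × Bool // p ≠ (i0, true)}) :=
      fun fw => lblEmb i0 (F fw.1) fw.2.1 (hWlen fw.2.1 fw.2.2) (hWc2 fw.2.1 fw.2.2)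
        (hWc1 fw.2.1 fw.2.2) (hFi0 fw.1) with hPsi
    have hPsiInj : Function.Injective Psi := by
      rintro ⟨f, w, hw⟩ ⟨f', w', hw'⟩ h
      rw [hPsi] at h
      have hll := lblEmb_eq h
      have hww : w = w' := by
        have := congrArg (List.map Prod.fst) hll
        rwa [lbl_map_fst, lbl_map_fst] at this
      subst hww
      have hf : f = f' := by
        funext m
        have hmem : (m : Fin N) ∈ w := by
          rw [← List.count_pos_iff, hWcount w hw m.1, if_neg m.2]
          omega
        have := lbl_inj_f w _ _ hll m.1 hmem
        rw [hF] at this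
        simpa [m.2] using this
      rw [hf]
    -- an embedding not in the range
    have hpos : 0 < 2 * N - 1 := by omega
    have hEe : Fintype.card (Fin (2 * N - 1)) =
        Fintype.card {p : Fin N × Bool // p ≠ (i0, true)} := by
      rw [Fintype.card_fin, hcardE]
    set eps : Fin (2 * N - 1) ≃ {p : Fin N × Bool // p ≠ (i0, true)} :=
      Fintype.equivOfCardEq hEe with heps
    have hi0f : ((i0, false) : Fin N × Bool) ≠ (i0, true) := by simp
    set e0 : Fin (2 * N - 1) ↪ {p : Fin N × Bool // p ≠ (i0, true)} :=
      ((Equiv.swap (⟨0, hpos⟩ : Fin (2 * N - 1)) (eps.symm ⟨(i0, false), hi0f⟩)).trans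
        eps).toEmbedding with he0
    have he0val : e0 ⟨0, hpos⟩ = ⟨(i0, false), hi0f⟩ := by
      rw [he0]
      simp [Equiv.swap_apply_left]
    have he0notin : e0 ∉ Set.range Psi := by
      rintro ⟨⟨f, w, hw⟩, hPsieq⟩
      have hwne : w ≠ [] := by
        intro hnil
        have := hWlen w hw
        rw [hnil] at this
        simp at this
        omega
      obtain ⟨m, w', rfl⟩ := List.exists_cons_of_ne_nil hwne
      have hval := congrArg
        (fun (e : Fin (2 * N - 1) ↪ {p : Fin N × Bool // p ≠ (i0, true)}) => e ⟨0, hpos⟩)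
        hPsieq
      rw [he0val] at hval
      have hfst : m = i0 := by
        have h1 : (Psi (f, ⟨m :: w', hw⟩) ⟨0, hpos⟩ : {p : Fin N × Bool // p ≠ (i0, true)}).1
            = (i0, false) := by rw [hval]
        have h2 : (Psi (f, ⟨m :: w', hw⟩) ⟨0, hpos⟩ :
            {p : Fin N × Bool // p ≠ (i0, true)}).1 = (m, F f m) := rfl
        rw [h2] at h1
        exact congrArg Prod.fst h1
      exact hWhead _ hw m w' rfl hfst
    -- counting
    have hcard := Fintype.card_lt_of_injective_of_notMem Psi hPsiInj he0notin
    rw [Fintype.card_prod, Fintype.card_fun, Fintype.card_bool, hcardsub,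
      Fintype.card_embedding_eq, Fintype.card_fin, hcardE, Nat.descFactorial_self] at hcard
    rw [hncard]
    exact hcard
  exact ⟨by rw [hnum]; exact hlow, by rw [hnum]; exact hhigh⟩
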